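/- Let N = 2n+1 be odd and D the N×N equispaced trigonometric differentiation matrix. Then D has eigenvalues exactly {i m : m ∈ ℤ, |m| ≤ n}; in particular 0 is an eigenvalue (with eigenvector the all-ones vector) and D is singular. -/

import Mathlib

open Real

/-- The equispaced trigonometric differentiation matrix, as a complex matrix. -/
noncomputable def Dmat (N : ℕ) : Matrix (Fin N) (Fin N) ℂ := fun j k =>
  if j = k then 0
  else (-1 : ℂ) ^ (j.1 + k.1) / (2 * (Real.sin (π * ((j.1 : ℝ) - (k.1 : ℝ)) / N) : ℂ))

/-- The primitive `(2n+1)`-st root of unity. -/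
noncomputable def zz (n : ℕ) : ℂ := Complex.exp (2 * π * Complex.I / (2 * n + 1))

section aux
variable (n : ℕ)

lemma zz_prim : IsPrimitiveRoot (zz n) (2 * n + 1) := by
  have := Complex.isPrimitiveRoot_exp (2 * n + 1) (by omega)
  simpa [zz] using this

lemma zz_ne_zero : zz n ≠ 0 := Complex.exp_ne_zero _

lemma zz_zpow_eq_one {d : ℤ} (h : ((2 * n + 1 : ℕ) : ℤ) ∣ d) : zz n ^ d = 1 := by
  rw [(zz_prim n).zpow_eq_one_iff_dvd]; exact h

lemma zz_zpow_congr {a b : ℤ} (h : ((2 * n + 1 : ℕ) : ℤ) ∣ a - b) :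
    zz n ^ a = zz n ^ b := by
  have : zz n ^ a = zz n ^ b * zz n ^ (a - b) := by
    rw [← zpow_add₀ (zz_ne_zero n)]; ring_nf
  rw [this, zz_zpow_eq_one n h, mul_one]

lemma zz_zpow_ne_one {d : ℤ} (h : ¬ ((2 * n + 1 : ℕ) : ℤ) ∣ d) : zz n ^ d ≠ 1 :=
  fun hc => h (((zz_prim n).zpow_eq_one_iff_dvd d).mp hc)

lemma zz_zpow_ne_one' {l : ℕ} (h1 : 1 ≤ l) (h2 : l < 2 * n + 1) : zz n ^ (l : ℤ) ≠ 1 := by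
  apply zz_zpow_ne_one
  intro hd
  have := Int.le_of_dvd (by exact_mod_cast h1) hd
  omega

lemma sum_zpow (t : ℤ) :
    ∑ l ∈ Finset.range (2 * n + 1), zz n ^ (t * l) =
      if ((2 * n + 1 : ℕ) : ℤ) ∣ t then ((2 * n + 1 : ℕ) : ℂ) else 0 := by
  split_ifs with h
  · have : ∀ l ∈ Finset.range (2 * n + 1), zz n ^ (t * l) = 1 := fun l _ =>
      zz_zpow_eq_one n (Dvd.dvd.mul_right h _)
    rw [Finset.sum_congr rfl this]
    simp
  · have hne : zz n ^ t ≠ 1 := zz_zpow_ne_one n h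
    have : ∀ l ∈ Finset.range (2 * n + 1), zz n ^ (t * l) = (zz n ^ t) ^ l := by
      intro l _
      rw [← zpow_natCast (zz n ^ t) l, ← zpow_mul]
    rw [Finset.sum_congr rfl this, geom_sum_eq hne]
    have : (zz n ^ t) ^ (2 * n + 1) = 1 := by
      rw [← zpow_natCast (zz n ^ t), ← zpow_mul, mul_comm]
      exact zz_zpow_eq_one n (Dvd.dvd.mul_right dvd_rfl _)
    rw [this, sub_self, zero_div]

lemma pair_inv (u : ℂ) (h1 : u ≠ 1) (h0 : u ≠ 0) : (u - 1)⁻¹ + (u⁻¹ - 1)⁻¹ = -1 := by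
  have hs : u - 1 ≠ 0 := sub_ne_zero.mpr h1
  have e1 : u⁻¹ - 1 = (1 - u) * u⁻¹ := by field_simp
  rw [e1, mul_inv, inv_inv, show (1:ℂ) - u = -(u - 1) by ring, inv_neg]
  field_simp
  ring

lemma halfsum :
    ∑ l ∈ Finset.Ico 1 (2 * n + 1), (zz n ^ (l : ℤ) - 1)⁻¹ = -(n : ℂ) := by
  set T := ∑ l ∈ Finset.Ico 1 (2 * n + 1), (zz n ^ (l : ℤ) - 1)⁻¹ with hT
  have hre : T = ∑ l ∈ Finset.Ico 1 (2 * n + 1), ((zz n ^ (l : ℤ))⁻¹ - 1)⁻¹ := by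
    rw [hT]
    refine Finset.sum_nbij' (fun l => 2 * n + 1 - l) (fun l => 2 * n + 1 - l) ?_ ?_ ?_ ?_ ?_
    · intro a ha; simp only [Finset.mem_Ico] at *; omega
    · intro a ha; simp only [Finset.mem_Ico] at *; omega
    · intro a ha; simp only [Finset.mem_Ico] at *; omega
    · intro a ha; simp only [Finset.mem_Ico] at *; omega
    · intro a ha
      simp only [Finset.mem_Ico] at ha
      congr 2
      rw [← zpow_neg]
      apply zz_zpow_congr
      have h : ((2 * n + 1 - a : ℕ) : ℤ) = 2 * n + 1 - a := by omega
      rw [h]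
      refine ⟨1, ?_⟩
      push_cast
      ring
  have key : T + T = -2 * (n : ℂ) := by
    nth_rewrite 2 [hre]
    rw [← Finset.sum_add_distrib]
    have : ∀ l ∈ Finset.Ico 1 (2 * n + 1),
        (zz n ^ (l : ℤ) - 1)⁻¹ + ((zz n ^ (l : ℤ))⁻¹ - 1)⁻¹ = -1 := by
      intro l hl
      simp only [Finset.mem_Ico] at hl
      exact pair_inv _ (zz_zpow_ne_one' n hl.1 hl.2) (zpow_ne_zero _ (zz_ne_zero n))
    rw [Finset.sum_congr rfl this]
    simp [Nat.card_Ico]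
  linear_combination key / 2

lemma Ssum (r : ℕ) (hr1 : 1 ≤ r) (hr2 : r ≤ 2 * n + 1) :
    ∑ l ∈ Finset.Ico 1 (2 * n + 1), zz n ^ ((r : ℤ) * l) * (zz n ^ (l : ℤ) - 1)⁻¹ =
      ((2 * n + 1 : ℕ) : ℂ) - r - n := by
  have step : ∀ l ∈ Finset.Ico 1 (2 * n + 1),
      zz n ^ ((r : ℤ) * l) * (zz n ^ (l : ℤ) - 1)⁻¹ =
        (∑ t ∈ Finset.range r, zz n ^ ((t : ℤ) * l)) + (zz n ^ (l : ℤ) - 1)⁻¹ := by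
    intro l hl
    simp only [Finset.mem_Ico] at hl
    have hne : zz n ^ (l : ℤ) ≠ 1 := zz_zpow_ne_one' n hl.1 hl.2
    have hs : zz n ^ (l : ℤ) - 1 ≠ 0 := sub_ne_zero.mpr hne
    have hgeom : ∑ t ∈ Finset.range r, (zz n ^ (l : ℤ)) ^ t =
        ((zz n ^ (l : ℤ)) ^ r - 1) / (zz n ^ (l : ℤ) - 1) := geom_sum_eq hne r
    have hsum : ∑ t ∈ Finset.range r, (zz n ^ (l : ℤ)) ^ t =
        ∑ t ∈ Finset.range r, zz n ^ ((t : ℤ) * l) := by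
      refine Finset.sum_congr rfl fun t _ => ?_
      rw [← zpow_natCast (zz n ^ (l : ℤ)) t, ← zpow_mul]
      ring_nf
    have hpow : (zz n ^ (l : ℤ)) ^ r = zz n ^ ((r : ℤ) * l) := by
      rw [← zpow_natCast (zz n ^ (l : ℤ)) r, ← zpow_mul]
      ring_nf
    rw [← hsum, hgeom, hpow]
    field_simp
    ring
  rw [Finset.sum_congr rfl step, Finset.sum_add_distrib, halfsum]
  have swap : ∑ l ∈ Finset.Ico 1 (2 * n + 1), ∑ t ∈ Finset.range r, zz n ^ ((t : ℤ) * l)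
      = ∑ t ∈ Finset.range r, ∑ l ∈ Finset.Ico 1 (2 * n + 1), zz n ^ ((t : ℤ) * l) :=
    Finset.sum_comm
  rw [swap]
  have inner : ∀ t ∈ Finset.range r,
      ∑ l ∈ Finset.Ico 1 (2 * n + 1), zz n ^ ((t : ℤ) * l) =
        (if ((2 * n + 1 : ℕ) : ℤ) ∣ (t : ℤ) then ((2 * n + 1 : ℕ) : ℂ) else 0) - 1 := by
    intro t _
    have hsub : ∑ l ∈ Finset.Ico 1 (2 * n + 1), zz n ^ ((t : ℤ) * l) =
        ∑ l ∈ Finset.range (2 * n + 1), zz n ^ ((t : ℤ) * l) -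
          ∑ l ∈ Finset.range 1, zz n ^ ((t : ℤ) * l) := by
      rw [Finset.sum_Ico_eq_sub _ (by omega)]
    rw [hsub, sum_zpow]
    simp
  rw [Finset.sum_congr rfl inner, Finset.sum_sub_distrib]
  have hone : ∀ t ∈ Finset.range r,
      (if ((2 * n + 1 : ℕ) : ℤ) ∣ (t : ℤ) then ((2 * n + 1 : ℕ) : ℂ) else 0) =
        if t = 0 then ((2 * n + 1 : ℕ) : ℂ) else 0 := by
    intro t ht
    simp only [Finset.mem_range] at ht
    by_cases h0 : t = 0
    · simp [h0]
    · rw [if_neg, if_neg h0]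
      intro hd
      have := Int.le_of_dvd (by omega) hd
      omega
  rw [Finset.sum_congr rfl hone, Finset.sum_ite_eq' (Finset.range r) 0 (fun _ => ((2 * n + 1 : ℕ) : ℂ))]
  rw [if_pos (Finset.mem_range.mpr (by omega))]
  simp
  ring

lemma fin_not_dvd {j k : Fin (2 * n + 1)} (h : j ≠ k) :
    ¬ ((2 * n + 1 : ℕ) : ℤ) ∣ ((j : ℤ) - (k : ℤ)) := by
  intro hd
  have hj := j.isLt
  have hk := k.isLt
  have hne : (j : ℤ) ≠ (k : ℤ) := by
    intro hc
    exact h (Fin.ext (by exact_mod_cast hc))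
  have := Int.eq_zero_of_dvd_of_natAbs_lt_natAbs hd (by omega)
  omega

lemma zz_d_ne_one {j k : Fin (2 * n + 1)} (h : j ≠ k) :
    zz n ^ ((j : ℤ) - (k : ℤ)) ≠ 1 := zz_zpow_ne_one n (fin_not_dvd n h)

lemma Dmat_entry (j k : Fin (2 * n + 1)) (h : j ≠ k) :
    Dmat (2 * n + 1) j k =
      Complex.I * zz n ^ (((n : ℤ) + 1) * ((j : ℤ) - (k : ℤ))) *
        (zz n ^ ((j : ℤ) - (k : ℤ)) - 1)⁻¹ := by
  have hNC : (2 * (n : ℂ) + 1) ≠ 0 := by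
    intro hc
    have : ((2 * n + 1 : ℕ) : ℂ) = 0 := by push_cast; linear_combination hc
    exact_mod_cast this
  set ζ : ℂ := Complex.exp (π * Complex.I / (2 * n + 1)) with hζdef
  have hζ0 : ζ ≠ 0 := Complex.exp_ne_zero _
  have hζN : ζ ^ (2 * n + 1 : ℕ) = -1 := by
    rw [hζdef, ← Complex.exp_nat_mul]
    rw [show ((2 * n + 1 : ℕ) : ℂ) * (↑π * Complex.I / (2 * (n : ℂ) + 1)) = ↑π * Complex.I by
      push_cast; field_simp]
    exact Complex.exp_pi_mul_I
  have hzzζ : ∀ e : ℤ, zz n ^ e = ζ ^ (2 * e) := by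
    intro e
    have h2 : zz n = ζ ^ (2 : ℕ) := by
      rw [hζdef, zz, ← Complex.exp_nat_mul]
      congr 1
      push_cast
      ring
    rw [h2, ← zpow_natCast ζ 2, ← zpow_mul]
    norm_num
  set d : ℤ := (j : ℤ) - (k : ℤ) with hd
  have hnum : ((-1 : ℂ)) ^ (j.1 + k.1) = ζ ^ ((2 * n + 1 : ℤ) * d) := by
    have e1 : ((-1 : ℂ)) ^ (j.1 + k.1) = ((-1 : ℂ)) ^ ((j.1 + k.1 : ℕ) : ℤ) :=
      (zpow_natCast _ _).symm
    have e2 : ((j.1 + k.1 : ℕ) : ℤ) = d + 2 * (k : ℤ) := by rw [hd]; push_cast; omega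
    have e3 : ((-1 : ℂ)) ^ (d + 2 * (k : ℤ)) = ((-1 : ℂ)) ^ d * (((-1 : ℂ)) ^ (2 : ℤ)) ^ (k : ℤ) := by
      rw [← zpow_mul, ← zpow_add₀ (by norm_num : (-1 : ℂ) ≠ 0)]
    have e4 : ((-1 : ℂ)) ^ d = ζ ^ ((2 * n + 1 : ℤ) * d) := by
      rw [← hζN, ← zpow_natCast ζ (2 * n + 1), ← zpow_mul]
      norm_num
    rw [e1, e2, e3, e4]
    norm_num
  have hsin : (2 : ℂ) * ((Real.sin (π * ((j.1 : ℝ) - (k.1 : ℝ)) / ((2 * n + 1 : ℕ) : ℝ)) : ℝ) : ℂ)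
      = (ζ ^ (-d) - ζ ^ d) * Complex.I := by
    rw [Complex.ofReal_sin]
    have harg : ((π * ((j.1 : ℝ) - (k.1 : ℝ)) / ((2 * n + 1 : ℕ) : ℝ) : ℝ) : ℂ)
        = (π : ℂ) * (d : ℂ) / (2 * (n : ℂ) + 1) := by rw [hd]; push_cast; ring
    rw [harg]
    have hsin_def : ∀ z : ℂ, Complex.sin z =
        (Complex.exp (-z * Complex.I) - Complex.exp (z * Complex.I)) * Complex.I / 2 :=
      fun z => rfl
    rw [hsin_def]
    have hexp1 : Complex.exp ((π : ℂ) * (d : ℂ) / (2 * (n : ℂ) + 1) * Complex.I) = ζ ^ d := by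
      rw [show (π : ℂ) * (d : ℂ) / (2 * (n : ℂ) + 1) * Complex.I
          = (d : ℂ) * (↑π * Complex.I / (2 * (n : ℂ) + 1)) by ring,
        Complex.exp_int_mul, hζdef]
    have hexp2 : Complex.exp (-((π : ℂ) * (d : ℂ) / (2 * (n : ℂ) + 1)) * Complex.I) = ζ ^ (-d) := by
      rw [show -((π : ℂ) * (d : ℂ) / (2 * (n : ℂ) + 1)) * Complex.I
          = ((-d : ℤ) : ℂ) * (↑π * Complex.I / (2 * (n : ℂ) + 1)) by push_cast; ring,
        Complex.exp_int_mul, hζdef]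
    rw [hexp1, hexp2]
    ring
  have h1 : ζ ^ (2 * d) - 1 ≠ 0 := by
    rw [← hzzζ]
    exact sub_ne_zero.mpr (zz_d_ne_one n h)
  have hfact : ζ ^ (-d) - ζ ^ d = (-ζ ^ (-d)) * (ζ ^ (2 * d) - 1) := by
    have hmm : ζ ^ (-d) * ζ ^ (2 * d) = ζ ^ d := by
      rw [← zpow_add₀ hζ0]; congr 1; ring
    rw [mul_sub, neg_mul, hmm]
    ring
  have h2 : ζ ^ (-d) - ζ ^ d ≠ 0 := by
    rw [hfact]
    exact mul_ne_zero (neg_ne_zero.mpr (zpow_ne_zero _ hζ0)) h1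
  rw [Dmat]
  rw [if_neg h, hnum, hsin, hzzζ, hzzζ]
  have e1 : ζ ^ ((2 * n + 1 : ℤ) * d) = (ζ ^ d) ^ (2 * n + 1 : ℕ) := by
    rw [← zpow_natCast (ζ ^ d), ← zpow_mul]
    congr 1
    push_cast
    ring
  have e2 : ζ ^ (2 * (((n : ℤ) + 1) * d)) = (ζ ^ d) ^ (2 * n + 2 : ℕ) := by
    rw [← zpow_natCast (ζ ^ d), ← zpow_mul]
    congr 1
    push_cast
    ring
  have e3 : ζ ^ (2 * d) = (ζ ^ d) ^ (2 : ℕ) := by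
    rw [← zpow_natCast (ζ ^ d), ← zpow_mul]
    congr 1
    push_cast
    ring
  have e4 : ζ ^ (-d) = (ζ ^ d)⁻¹ := by rw [zpow_neg]
  rw [e1, e2, e3, e4]
  have hx0 : ζ ^ d ≠ 0 := zpow_ne_zero _ hζ0
  have h2' : (ζ ^ d)⁻¹ - ζ ^ d ≠ 0 := by rw [← e4]; exact h2
  have h1' : (ζ ^ d) ^ (2 : ℕ) - 1 ≠ 0 := by rw [← e3]; exact h1
  rw [mul_comm ((ζ ^ d)⁻¹ - ζ ^ d) Complex.I, ← div_div, Complex.div_I, div_eq_iff h2']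
  field_simp
  ring

lemma Dmat_antisym (j k : Fin (2 * n + 1)) :
    Dmat (2 * n + 1) j k = - Dmat (2 * n + 1) k j := by
  by_cases h : j = k
  · subst h; simp [Dmat]
  · rw [Dmat, Dmat]
    simp only [if_neg h, if_neg (Ne.symm h)]
    have harg : π * ((j.1 : ℝ) - (k.1 : ℝ)) / ((2 * n + 1 : ℕ) : ℝ)
        = -(π * ((k.1 : ℝ) - (j.1 : ℝ)) / ((2 * n + 1 : ℕ) : ℝ)) := by ring
    rw [harg, Real.sin_neg, Nat.add_comm j.1 k.1]
    push_cast
    ring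

lemma fin_sub_dvd (j k : Fin (2 * n + 1)) :
    ((2 * n + 1 : ℕ) : ℤ) ∣ ((j : ℤ) - (k : ℤ)) - (((j - k : Fin (2 * n + 1)) : ℕ) : ℤ) := by
  have hk := k.isLt
  have hval : ((j - k : Fin (2 * n + 1)) : ℕ) = ((2 * n + 1) - k.1 + j.1) % (2 * n + 1) := by
    rw [Fin.sub_def]
  have hcast : ((((j - k : Fin (2 * n + 1)) : ℕ)) : ℤ)
      = ((2 * n + 1 : ℤ) - k.1 + j.1) % (2 * n + 1) := by
    rw [hval]
    push_cast [Nat.cast_sub hk.le]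
    ring_nf
  obtain ⟨c, hc⟩ : ((2 * n + 1 : ℕ) : ℤ) ∣ ((2 * n + 1 : ℤ) - k.1 + j.1)
      - (((j - k : Fin (2 * n + 1)) : ℕ) : ℤ) := by
    rw [hcast]
    push_cast
    exact Int.dvd_self_sub_of_emod_eq rfl
  exact ⟨c - 1, by push_cast at hc ⊢; linear_combination hc⟩

open Fin.NatCast in
lemma eig (m : ℤ) (hm : |m| ≤ (n : ℤ)) :
    (Dmat (2 * n + 1)).mulVec (fun j : Fin (2 * n + 1) => zz n ^ (m * (j : ℤ))) =
      (Complex.I * m) • (fun j : Fin (2 * n + 1) => zz n ^ (m * (j : ℤ))) := by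
  obtain ⟨hm1, hm2⟩ := abs_le.mp hm
  have hz0 : zz n ≠ 0 := zz_ne_zero n
  set r : ℕ := ((n : ℤ) + 1 - m).toNat with hrdef
  have hr : (r : ℤ) = (n : ℤ) + 1 - m := Int.toNat_of_nonneg (by omega)
  have hr1 : 1 ≤ r := by omega
  have hr2 : r ≤ 2 * n + 1 := by omega
  funext j
  simp only [Matrix.mulVec, dotProduct, Pi.smul_apply, smul_eq_mul]
  rw [← Finset.add_sum_erase Finset.univ _ (Finset.mem_univ j)]
  have hjj : Dmat (2 * n + 1) j j * zz n ^ (m * (j : ℤ)) = 0 := by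
    simp [Dmat]
  rw [hjj, zero_add]
  have hstep : ∀ k ∈ Finset.univ.erase j,
      Dmat (2 * n + 1) j k * zz n ^ (m * (k : ℤ)) =
        (Complex.I * zz n ^ (m * (j : ℤ))) *
          (zz n ^ (((n : ℤ) + 1 - m) * ((j : ℤ) - (k : ℤ)))
            * (zz n ^ ((j : ℤ) - (k : ℤ)) - 1)⁻¹) := by
    intro k hk
    have hne : j ≠ k := (Finset.ne_of_mem_erase hk).symm
    rw [Dmat_entry n j k hne]
    have hexp : zz n ^ (((n : ℤ) + 1) * ((j : ℤ) - (k : ℤ))) * zz n ^ (m * (k : ℤ))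
        = zz n ^ (m * (j : ℤ)) * zz n ^ (((n : ℤ) + 1 - m) * ((j : ℤ) - (k : ℤ))) := by
      rw [← zpow_add₀ hz0, ← zpow_add₀ hz0]
      congr 1
      ring
    linear_combination (Complex.I * (zz n ^ ((j : ℤ) - (k : ℤ)) - 1)⁻¹) * hexp
  rw [Finset.sum_congr rfl hstep, ← Finset.mul_sum]
  have hre : ∑ k ∈ Finset.univ.erase j,
      zz n ^ (((n : ℤ) + 1 - m) * ((j : ℤ) - (k : ℤ)))
        * (zz n ^ ((j : ℤ) - (k : ℤ)) - 1)⁻¹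
      = ∑ l ∈ Finset.Ico 1 (2 * n + 1), zz n ^ ((r : ℤ) * l) * (zz n ^ (l : ℤ) - 1)⁻¹ := by
    refine Finset.sum_nbij' (fun k => ((j - k : Fin (2 * n + 1)) : ℕ))
      (fun l => j - (l : Fin (2 * n + 1))) ?_ ?_ ?_ ?_ ?_
    · intro k hk
      have hne : k ≠ j := Finset.ne_of_mem_erase hk
      have h0 : (j - k : Fin (2 * n + 1)) ≠ 0 := by
        rw [sub_ne_zero]
        exact (Ne.symm hne)
      refine Finset.mem_Ico.mpr ⟨?_, (j - k).isLt⟩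
      rcases Nat.eq_zero_or_pos ((j - k : Fin (2 * n + 1)) : ℕ) with h | h
      · exact absurd (Fin.ext h : (j - k : Fin (2 * n + 1)) = 0) h0
      · exact h
    · intro l hl
      obtain ⟨hl1, hl2⟩ := Finset.mem_Ico.mp hl
      refine Finset.mem_erase.mpr ⟨?_, Finset.mem_univ _⟩
      intro hc
      have h0 : ((l : ℕ) : Fin (2 * n + 1)) = 0 := sub_eq_self.mp hc
      have hv : (((l : ℕ) : Fin (2 * n + 1)) : ℕ) = l := Fin.val_cast_of_lt hl2
      rw [h0] at hv
      simp at hv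
      omega
    · intro k hk
      simp only [Fin.cast_val_eq_self]
      exact sub_sub_cancel j k
    · intro l hl
      obtain ⟨hl1, hl2⟩ := Finset.mem_Ico.mp hl
      simp only [sub_sub_cancel]
      exact Fin.val_cast_of_lt hl2
    · intro k hk
      have hd1 := fin_sub_dvd n j k
      have e1 : zz n ^ ((j : ℤ) - (k : ℤ)) = zz n ^ ((((j - k : Fin (2 * n + 1)) : ℕ)) : ℤ) :=
        zz_zpow_congr n hd1
      have e2 : zz n ^ (((n : ℤ) + 1 - m) * ((j : ℤ) - (k : ℤ)))
          = zz n ^ ((r : ℤ) * ((((j - k : Fin (2 * n + 1)) : ℕ)) : ℤ)) := by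
        apply zz_zpow_congr
        rw [hr, ← mul_sub]
        exact Dvd.dvd.mul_left hd1 _
      rw [e1, e2]
  rw [hre, Ssum n r hr1 hr2]
  have hval : ((2 * n + 1 : ℕ) : ℂ) - r - n = m := by
    have hrC : ((r : ℤ) : ℂ) = ((n : ℤ) : ℂ) + 1 - ((m : ℤ) : ℂ) := by exact_mod_cast hr
    push_cast at hrC ⊢
    linear_combination -hrC
  rw [hval]
  ring

end aux

theorem Dmat_spectrum (n : ℕ) :
    ({μ : ℂ | ∃ v : Fin (2 * n + 1) → ℂ, v ≠ 0 ∧ (Dmat (2 * n + 1)).mulVec v = μ • v}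
        = {μ : ℂ | ∃ m : ℤ, |m| ≤ (n : ℤ) ∧ μ = Complex.I * m}) ∧
    (Dmat (2 * n + 1)).mulVec (fun _ => (1 : ℂ)) = 0 ∧
    (Dmat (2 * n + 1)).det = 0 := by
  have hz0 : zz n ≠ 0 := zz_ne_zero n
  have hNne : ((2 * n + 1 : ℕ) : ℂ) ≠ 0 := by
    exact_mod_cast (by omega : (2 * n + 1 : ℕ) ≠ 0)
  have h0 := eig n 0 (by simp)
  have hones : (Dmat (2 * n + 1)).mulVec (fun _ => (1 : ℂ)) = 0 := by
    have e : (fun j : Fin (2 * n + 1) => zz n ^ ((0 : ℤ) * (j : ℤ))) = fun _ => (1 : ℂ) := by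
      funext j; simp
    rw [e] at h0
    simpa using h0
  have honesne : (fun _ : Fin (2 * n + 1) => (1 : ℂ)) ≠ 0 := by
    intro hc
    have := congrFun hc ⟨0, by omega⟩
    simp at this
  refine ⟨?_, hones, Matrix.exists_mulVec_eq_zero_iff.mp ⟨_, honesne, hones⟩⟩
  ext μ
  simp only [Set.mem_setOf_eq]
  constructor
  · rintro ⟨v, hv0, hv⟩
    set c : ℤ → ℂ := fun t => ∑ k, v k * zz n ^ (-t * (k : ℤ)) with hc
    have claimA : ∀ t : ℤ, |t| ≤ (n : ℤ) → Complex.I * t * c t = μ * c t := by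
      intro t ht
      have htn : |(-t)| ≤ (n : ℤ) := by rw [abs_neg]; exact ht
      have heig := eig n (-t) htn
      have hS1 : ∑ k, ((Dmat (2 * n + 1)).mulVec v) k * zz n ^ (-t * (k : ℤ)) = μ * c t := by
        rw [hv, hc]
        simp only [Pi.smul_apply, smul_eq_mul]
        rw [Finset.mul_sum]
        exact Finset.sum_congr rfl fun k _ => by ring
      have hS2 : ∑ k, ((Dmat (2 * n + 1)).mulVec v) k * zz n ^ (-t * (k : ℤ))
          = Complex.I * t * c t := by
        have expand : ∀ k : Fin (2 * n + 1), ((Dmat (2 * n + 1)).mulVec v) k * zz n ^ (-t * (k : ℤ))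
            = ∑ k', Dmat (2 * n + 1) k k' * v k' * zz n ^ (-t * (k : ℤ)) := by
          intro k
          simp only [Matrix.mulVec, dotProduct]
          rw [Finset.sum_mul]
        rw [Finset.sum_congr rfl (fun k _ => expand k), Finset.sum_comm]
        have inner : ∀ k' : Fin (2 * n + 1),
            ∑ k, Dmat (2 * n + 1) k k' * v k' * zz n ^ (-t * (k : ℤ))
            = v k' * (Complex.I * t * zz n ^ (-t * (k' : ℤ))) := by
          intro k'
          have hmv := congrFun heig k'
          simp only [Matrix.mulVec, dotProduct, Pi.smul_apply, smul_eq_mul] at hmv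
          have htr : ∑ k, Dmat (2 * n + 1) k k' * zz n ^ (-t * (k : ℤ))
              = Complex.I * t * zz n ^ (-t * (k' : ℤ)) := by
            have hneg : ∑ k, Dmat (2 * n + 1) k k' * zz n ^ (-t * (k : ℤ))
                = - ∑ k, Dmat (2 * n + 1) k' k * zz n ^ (-t * (k : ℤ)) := by
              rw [← Finset.sum_neg_distrib]
              refine Finset.sum_congr rfl fun k _ => ?_
              rw [Dmat_antisym n k k']
              ring
            rw [hneg, hmv]
            push_cast
            ring
          calc ∑ k, Dmat (2 * n + 1) k k' * v k' * zz n ^ (-t * (k : ℤ))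
              = v k' * ∑ k, Dmat (2 * n + 1) k k' * zz n ^ (-t * (k : ℤ)) := by
                rw [Finset.mul_sum]; exact Finset.sum_congr rfl fun k _ => by ring
            _ = v k' * (Complex.I * t * zz n ^ (-t * (k' : ℤ))) := by rw [htr]
        rw [Finset.sum_congr rfl (fun k' _ => inner k'), hc]
        rw [Finset.mul_sum]
        exact Finset.sum_congr rfl fun k _ => by ring
      rw [← hS2]
      exact hS1
    have claimB : ∃ t : ℤ, |t| ≤ (n : ℤ) ∧ c t ≠ 0 := by
      by_contra hB
      push_neg at hB
      apply hv0
      funext j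
      have hTj : ∑ m' ∈ Finset.range (2 * n + 1),
          c ((m' : ℤ) - n) * zz n ^ (((m' : ℤ) - n) * (j : ℤ)) = 0 := by
        refine Finset.sum_eq_zero fun m' hm' => ?_
        have hb : |(m' : ℤ) - n| ≤ (n : ℤ) := by
          have := Finset.mem_range.mp hm'
          rw [abs_le]
          omega
        rw [hB _ hb, zero_mul]
      have inner : ∀ k : Fin (2 * n + 1),
          ∑ m' ∈ Finset.range (2 * n + 1), zz n ^ (((m' : ℤ) - n) * ((j : ℤ) - (k : ℤ)))
            = if k = j then ((2 * n + 1 : ℕ) : ℂ) else 0 := by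
        intro k
        by_cases hkj : k = j
        · subst hkj
          rw [if_pos rfl]
          have : ∀ m' ∈ Finset.range (2 * n + 1),
              zz n ^ (((m' : ℤ) - n) * ((k : ℤ) - (k : ℤ))) = 1 := by
            intro m' _
            rw [sub_self, mul_zero, zpow_zero]
          rw [Finset.sum_congr rfl this]
          simp
        · rw [if_neg hkj]
          have hsplit : ∀ m' ∈ Finset.range (2 * n + 1),
              zz n ^ (((m' : ℤ) - n) * ((j : ℤ) - (k : ℤ)))
                = zz n ^ (-(n : ℤ) * ((j : ℤ) - (k : ℤ)))
                  * zz n ^ (((j : ℤ) - (k : ℤ)) * (m' : ℤ)) := by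
            intro m' _
            rw [← zpow_add₀ hz0]
            congr 1
            ring
          rw [Finset.sum_congr rfl hsplit, ← Finset.mul_sum, sum_zpow n ((j : ℤ) - (k : ℤ)),
            if_neg (fin_not_dvd n (fun hc => hkj (hc.symm)))]
          ring
      have hTj2 : ∑ m' ∈ Finset.range (2 * n + 1),
          c ((m' : ℤ) - n) * zz n ^ (((m' : ℤ) - n) * (j : ℤ))
          = ((2 * n + 1 : ℕ) : ℂ) * v j := by
        have expand : ∀ m' ∈ Finset.range (2 * n + 1),
            c ((m' : ℤ) - n) * zz n ^ (((m' : ℤ) - n) * (j : ℤ))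
              = ∑ k, v k * zz n ^ (((m' : ℤ) - n) * ((j : ℤ) - (k : ℤ))) := by
          intro m' _
          rw [hc]
          rw [Finset.sum_mul]
          refine Finset.sum_congr rfl fun k _ => ?_
          rw [mul_assoc, ← zpow_add₀ hz0]
          congr 2
          ring
        rw [Finset.sum_congr rfl expand, Finset.sum_comm]
        have : ∀ k : Fin (2 * n + 1),
            ∑ m' ∈ Finset.range (2 * n + 1),
              v k * zz n ^ (((m' : ℤ) - n) * ((j : ℤ) - (k : ℤ)))
            = v k * (if k = j then ((2 * n + 1 : ℕ) : ℂ) else 0) := by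
          intro k
          rw [← Finset.mul_sum, inner k]
        rw [Finset.sum_congr rfl (fun k _ => this k)]
        simp only [mul_ite, mul_zero]
        rw [Finset.sum_ite_eq' Finset.univ j (fun k => v k * ((2 * n + 1 : ℕ) : ℂ))]
        rw [if_pos (Finset.mem_univ j)]
        ring
      rw [hTj] at hTj2
      have := mul_eq_zero.mp hTj2.symm
      rcases this with h | h
      · exact absurd h hNne
      · exact h
    obtain ⟨t, ht, hct⟩ := claimB
    have hA := claimA t ht
    refine ⟨t, ht, ?_⟩
    have hz : (μ - Complex.I * t) * c t = 0 := by linear_combination -hA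
    rcases mul_eq_zero.mp hz with h | h
    · exact sub_eq_zero.mp h
    · exact absurd h hct
  · rintro ⟨m, hm, rfl⟩
    refine ⟨fun j => zz n ^ (m * (j : ℤ)), ?_, eig n m hm⟩
    intro hc
    have := congrFun hc ⟨0, by omega⟩
    simp at this
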